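/- Let F be a field of characteristic zero. Every Belyi polynomial B ∈ F[X] of degree exactly 2 satisfies B(4) ∉ {0,1}. (Hence the Belyi height of 4 is not 2, and combined with the other results ℋ(4) = 3.) -/

import Mathlib

open Polynomial

/-- A polynomial `B` over a field `F` is a *Belyi polynomial* if `B 0 ∈ {0,1}`,
`B 1 ∈ {0,1}`, and the derivative `B'` divides `B * (B - 1)`. -/
def IsBelyi {F : Type*} [Field F] (B : F[X]) : Prop :=
  B.eval 0 ∈ ({0, 1} : Set F) ∧ B.eval 1 ∈ ({0, 1} : Set F) ∧
    B.derivative ∣ B * (B - 1)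

/-- Over a field of characteristic zero, no Belyi polynomial of degree exactly `2`
maps `4` into `{0, 1}`; hence the Belyi height of `4` is not `2`. -/
theorem no_quadratic_belyi_at_four {F : Type*} [Field F] [CharZero F]
    (B : F[X]) (hB : IsBelyi B) (hdeg : B.natDegree = 2) :
    B.eval 4 ∉ ({0, 1} : Set F) := by
  obtain ⟨h0, h1, hdvd⟩ := hB
  set a := B.coeff 2 with ha_def
  set b := B.coeff 1 with hb_def
  set c := B.coeff 0 with hc_def
  have hBne : B ≠ 0 := fun h => by simp [h] at hdeg
  have ha : a ≠ 0 := by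
    have := Polynomial.leadingCoeff_ne_zero.mpr hBne
    rwa [Polynomial.leadingCoeff, hdeg] at this
  have h2a : (2 : F) * a ≠ 0 := mul_ne_zero two_ne_zero ha
  have hBexp : B = C a * X ^ 2 + C b * X + C c := by
    ext i
    match i with
    | 0 => simp [a, b, c]
    | 1 => simp [a, b, c]
    | 2 => simp [a, b, c]
    | (n+3) =>
      rw [B.coeff_eq_zero_of_natDegree_lt (by omega)]
      simp [coeff_X_pow, coeff_C]
  set r : F := -(b / (2 * a)) with hr_def
  have hd : derivative B = C (2 * a) * (X - C r) := by
    have e1 : (2 * a) * r = -b := by rw [hr_def]; field_simp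
    rw [mul_sub, ← C_mul, e1, hBexp]
    simp only [derivative_add, derivative_mul, derivative_C, derivative_X_pow, derivative_X,
      map_mul, map_neg, map_ofNat, C_eq_natCast, Nat.cast_ofNat]
    ring
  have hdvd' : (X - C r) ∣ B * (B - 1) := by
    rw [hd] at hdvd
    exact dvd_trans (dvd_mul_left _ _) hdvd
  have hroot : B.eval r * (B.eval r - 1) = 0 := by
    have := (dvd_iff_isRoot).mp hdvd'
    simpa [IsRoot, eval_mul] using this
  have hevr : B.eval r = a * r ^ 2 + b * r + c := by simp [hBexp]
  have hu : b ^ 2 = 4 * a * c ∨ b ^ 2 = 4 * a * c - 4 * a := by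
    rcases mul_eq_zero.mp hroot with h | h
    · left
      rw [hevr, hr_def] at h
      field_simp at h
      have h2 : a ^ 2 * (4 * a * c - b ^ 2) = 0 := by linear_combination a ^ 2 * h
      have h3 := (mul_eq_zero.mp h2).resolve_left (pow_ne_zero 2 ha)
      linear_combination -h3
    · right
      rw [sub_eq_zero, hevr, hr_def] at h
      field_simp at h
      have h2 : a ^ 2 * (4 * a * c - 4 * a - b ^ 2) = 0 := by linear_combination a ^ 2 * h
      have h3 := (mul_eq_zero.mp h2).resolve_left (pow_ne_zero 2 ha)
      linear_combination -h3
  have hc : c = 0 ∨ c = 1 := by simpa [hBexp] using h0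
  have ht : a + b + c = 0 ∨ a + b + c = 1 := by
    have := h1
    simp [hBexp, Set.mem_insert_iff] at this
    rcases this with h | h
    · left; linear_combination h
    · right; linear_combination h
  intro hmem
  have h4 : 16 * a + 4 * b + c = 0 ∨ 16 * a + 4 * b + c = 1 := by
    simp [hBexp, Set.mem_insert_iff] at hmem
    rcases hmem with h | h
    · left; linear_combination h
    · right; linear_combination h
  rcases hc with hc | hc <;> rcases ht with ht | ht <;> rcases h4 with h4 | h4
  · exact ha (by linear_combination (h4 - 4 * ht + 3 * hc) / 12)
  · have ha' : a = 1/12 := by linear_combination (h4 - 4 * ht + 3 * hc) / 12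
    have hb' : b = -(1/12) := by linear_combination ht - ha' - hc
    rcases hu with hu | hu <;> rw [ha', hb', hc] at hu <;> norm_num at hu
  · have ha' : a = -(1/3) := by linear_combination (h4 - 4 * ht + 3 * hc) / 12
    have hb' : b = 4/3 := by linear_combination ht - ha' - hc
    rcases hu with hu | hu <;> rw [ha', hb', hc] at hu <;> norm_num at hu
  · have ha' : a = -(1/4) := by linear_combination (h4 - 4 * ht + 3 * hc) / 12
    have hb' : b = 5/4 := by linear_combination ht - ha' - hc
    rcases hu with hu | hu <;> rw [ha', hb', hc] at hu <;> norm_num at hu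
  · have ha' : a = 1/4 := by linear_combination (h4 - 4 * ht + 3 * hc) / 12
    have hb' : b = -(5/4) := by linear_combination ht - ha' - hc
    rcases hu with hu | hu <;> rw [ha', hb', hc] at hu <;> norm_num at hu
  · have ha' : a = 1/3 := by linear_combination (h4 - 4 * ht + 3 * hc) / 12
    have hb' : b = -(4/3) := by linear_combination ht - ha' - hc
    rcases hu with hu | hu <;> rw [ha', hb', hc] at hu <;> norm_num at hu
  · have ha' : a = -(1/12) := by linear_combination (h4 - 4 * ht + 3 * hc) / 12
    have hb' : b = 1/12 := by linear_combination ht - ha' - hc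
    rcases hu with hu | hu <;> rw [ha', hb', hc] at hu <;> norm_num at hu
  · exact ha (by linear_combination (h4 - 4 * ht + 3 * hc) / 12)
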